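/- Let k be a subfield of the real numbers ℝ that is algebraically closed in ℝ (every real number that is algebraic over k already lies in k), and let A be a nontrivial finite-dimensional associative unital k-algebra. Then either A has a zero-divisor (there exist nonzero x, y ∈ A with x·y = 0), or A is isomorphic as a k-algebra to one of: k itself; the quadratic extension k[X]/(X² + 1); or the quaternion algebra over k (the four-dimensional k-algebra with basis 1, i, j, ij satisfying i² = j² = −1 and i·j = −j·i). -/

import Mathlib

set_option synthInstance.maxHeartbeats 1000000
set_option maxHeartbeats 1600000
set_option linter.unusedSectionVars false

open Polynomial

section FrobAux

variable (k : Subfield ℝ)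

lemma frob_aux_sqrt
    (halg : ∀ x : ℝ, (∃ p : Polynomial k, p ≠ 0 ∧ Polynomial.aeval x p = 0) → x ∈ k)
    (c : k) (hc : 0 ≤ c) : ∃ s : k, 0 ≤ s ∧ s * s = c := by
  have hcR : (0:ℝ) ≤ (c : ℝ) := by exact_mod_cast hc
  have hmem : Real.sqrt c ∈ k := by
    apply halg
    refine ⟨X^2 - C c, X_pow_sub_C_ne_zero (by norm_num) c, ?_⟩
    have : (algebraMap k ℝ) c = (c : ℝ) := rfl
    simp [this, Real.sq_sqrt hcR]
  refine ⟨⟨Real.sqrt c, hmem⟩, ?_, ?_⟩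
  · exact_mod_cast Real.sqrt_nonneg (c : ℝ)
  · ext
    push_cast
    exact Real.mul_self_sqrt hcR

lemma frob_aux_irred_deg
    (halg : ∀ x : ℝ, (∃ p : Polynomial k, p ≠ 0 ∧ Polynomial.aeval x p = 0) → x ∈ k)
    {p : Polynomial k} (hp : Irreducible p) (hm : p.Monic) :
    p.natDegree = 1 ∨ (p.natDegree = 2 ∧ (p.coeff 1)^2 < 4 * p.coeff 0) := by
  letI : Algebra k ℂ := ((algebraMap ℝ ℂ).comp (algebraMap k ℝ)).toAlgebra
  haveI : @IsScalarTower k ℝ ℂ _ _ Algebra.toSMul := IsScalarTower.of_algebraMap_eq fun x => rfl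
  have hp0 : p ≠ 0 := hp.ne_zero
  obtain ⟨z, hz⟩ : ∃ z : ℂ, aeval z p = 0 :=
    IsAlgClosed.exists_aeval_eq_zero ℂ p (degree_pos_of_irreducible hp).ne'
  by_cases him : z.im = 0
  · -- real root
    left
    have hzre : z = ((z.re : ℝ) : ℂ) := by
      apply Complex.ext <;> simp [him]
    have hre : aeval (z.re : ℝ) p = 0 := by
      have : aeval (algebraMap ℝ ℂ z.re) p = algebraMap ℝ ℂ (aeval (z.re:ℝ) p) :=
        aeval_algebraMap_apply ℂ z.re p
      rw [Complex.coe_algebraMap, ← hzre, hz] at this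
      exact Complex.ofReal_eq_zero.mp this.symm
    have hmem : z.re ∈ k := halg _ ⟨p, hp0, hre⟩
    have hroot : IsRoot p ⟨z.re, hmem⟩ := by
      have h2 : aeval (algebraMap k ℝ (⟨z.re, hmem⟩:k)) p
          = algebraMap k ℝ (p.eval (⟨z.re, hmem⟩:k)) :=
        aeval_algebraMap_apply_eq_algebraMap_eval _ p
      have h3 : algebraMap k ℝ (⟨z.re, hmem⟩:k) = z.re := rfl
      rw [h3, hre] at h2
      exact (map_eq_zero_iff _ (algebraMap k ℝ).injective).mp h2.symm
    have := degree_eq_one_of_irreducible_of_root hp hroot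
    exact natDegree_eq_of_degree_eq_some this
  · -- nonreal root: quadratic minimal polynomial
    right
    have hzq : aeval z (p.map (algebraMap k ℝ)) = 0 := by
      rwa [aeval_map_algebraMap]
    have hzalg : IsIntegral k z := (isAlgebraic_iff_isIntegral).mp ⟨p, hp0, hz⟩
    have hconj : IsIntegral k ((starRingEnd ℂ) z) := by
      apply (isAlgebraic_iff_isIntegral).mp
      refine ⟨p, hp0, ?_⟩
      have := Polynomial.aeval_conj (K := ℂ) (p.map (algebraMap k ℝ)) z
      rw [hzq, map_zero] at this
      rwa [aeval_map_algebraMap] at this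
    have hofreal : ∀ r : ℝ, IsIntegral k ((r : ℝ) : ℂ) → r ∈ k := by
      intro r hr
      obtain ⟨q, hq0, hqz⟩ := hr.isAlgebraic
      apply halg
      refine ⟨q, hq0, ?_⟩
      have : aeval (algebraMap ℝ ℂ r) q = algebraMap ℝ ℂ (aeval r q) :=
        aeval_algebraMap_apply ℂ r q
      rw [show algebraMap ℝ ℂ r = (r:ℂ) from rfl, hqz] at this
      exact (map_eq_zero_iff _ Complex.ofReal_injective).mp this.symm
    have hre2 : (2 * z.re) ∈ k := by
      apply hofreal
      have := hzalg.add hconj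
      rwa [Complex.add_conj] at this
    have hnsq : Complex.normSq z ∈ k := by
      apply hofreal
      have := hzalg.mul hconj
      rwa [Complex.mul_conj] at this
    set b : k := ⟨2 * z.re, hre2⟩ with hb
    set c : k := ⟨Complex.normSq z, hnsq⟩ with hc
    set q₀ : Polynomial k := X^2 - C b * X + C c with hq₀
    have hmapq : q₀.map (algebraMap k ℝ) = X^2 - C (2*z.re) * X + C (‖z‖^2) := by
      have h1 : algebraMap k ℝ b = 2 * z.re := rfl
      have h2 : algebraMap k ℝ c = ‖z‖^2 := by
        show (Complex.normSq z : ℝ) = ‖z‖^2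
        rw [Complex.sq_norm]
      simp [hq₀, Polynomial.map_add, Polynomial.map_sub, Polynomial.map_mul,
        Polynomial.map_pow, map_X, map_C, h1, h2]
    have hdvd : q₀ ∣ p := by
      rw [← map_dvd_map' (algebraMap k ℝ), hmapq]
      exact Polynomial.quadratic_dvd_of_aeval_eq_zero_im_ne_zero _ hzq him
    have hq₀monic : q₀.Monic := by
      rw [hq₀]
      monicity!
    have hq₀deg : q₀.natDegree = 2 := by
      rw [hq₀]
      compute_degree!
    obtain ⟨u, hu⟩ := hdvd
    have huunit : IsUnit u := by
      rw [hu] at hp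
      refine (of_irreducible_mul hp).resolve_left ?_
      intro hq
      have := natDegree_eq_zero_of_isUnit hq
      omega
    have hassoc : Associated q₀ p := ⟨huunit.unit, by rw [hu]; rfl⟩
    have hpq : p = q₀ := (eq_of_monic_of_associated hq₀monic hm hassoc).symm
    subst hpq
    constructor
    · exact hq₀deg
    · have hc1 : q₀.coeff 1 = -b := by
        rw [hq₀]
        simp [coeff_X_pow]
      have hc0 : q₀.coeff 0 = c := by
        rw [hq₀]
        simp [coeff_X_pow]
      rw [hc1, hc0]
      rw [← Subtype.coe_lt_coe]
      push_cast
      have h4 : ((4:↥k):ℝ) = 4 := by norm_cast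
      rw [h4, show (c:ℝ) = Complex.normSq z from rfl, show (b:ℝ) = 2*z.re from rfl,
        Complex.normSq_apply]
      have : z.im ^ 2 > 0 := by positivity
      nlinarith [this]

end FrobAux

section FrobAlg

variable (k : Subfield ℝ) {A : Type} [Ring A] [Algebra k A]

/-- `x` squares to a nonpositive scalar. -/
def FrobNegSq (x : A) : Prop := ∃ c : k, c ≤ 0 ∧ x * x = algebraMap k A c

lemma frob_expand_add_sq (r : k) (x : A) :
    (x + algebraMap k A r) * (x + algebraMap k A r)
      = x*x + algebraMap k A (2*r) * x + algebraMap k A (r*r) := by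
  have h : algebraMap k A r * x = x * algebraMap k A r := Algebra.commutes r x
  have e : (x + algebraMap k A r) * (x + algebraMap k A r)
      = x*x + x*algebraMap k A r + algebraMap k A r*x + algebraMap k A r*algebraMap k A r := by
    noncomm_ring
  rw [e, ← h, map_mul, map_mul, map_ofNat]
  noncomm_ring

lemma frob_expand_affine (α β c₁ : k) (x : A) (hx : x*x = algebraMap k A c₁) :
    (algebraMap k A α + β•x) * (algebraMap k A α + β•x)
      = algebraMap k A (α*α + β*β*c₁) + (2*(α*β))•x := by
  simp only [Algebra.algebraMap_eq_smul_one, add_mul, mul_add, smul_mul_smul_comm,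
    one_mul, mul_one, hx, Algebra.algebraMap_eq_smul_one, smul_smul]
  module

section domain

variable [IsDomain A]

lemma frob_negsq_scalar {x : A} (hx : FrobNegSq k x) {e : k}
    (he : x = algebraMap k A e) : x = 0 := by
  obtain ⟨c, hc, hxx⟩ := hx
  rw [he, ← map_mul] at hxx
  have h1 : e * e = c := (algebraMap k A).injective hxx
  have h2 : e * e ≤ 0 := h1 ▸ hc
  have h3 : e = 0 := by nlinarith [mul_self_nonneg e]
  rw [he, h3, map_zero]

lemma frob_negsq_smul {x : A} (hx : FrobNegSq k x) (t : k) : FrobNegSq k (t • x) := by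
  obtain ⟨c, hc, hxx⟩ := hx
  refine ⟨t*t*c, ?_, ?_⟩
  · exact mul_nonpos_of_nonneg_of_nonpos (mul_self_nonneg t) hc
  · rw [smul_mul_smul_comm, hxx, Algebra.smul_def, ← map_mul]

lemma frob_negsq_indep {x y : A} (hx : FrobNegSq k x) (hy : FrobNegSq k y)
    (hx0 : x ≠ 0) (hdep : ∀ t : k, y ≠ t • x) :
    ∀ a b d : k, a • x + b • y = algebraMap k A d → a = 0 ∧ b = 0 := by
  intro a b d h
  obtain ⟨c₁, hc₁, hxx⟩ := hx
  by_cases hb : b = 0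
  · subst hb
    constructor
    · by_contra ha
      have : x = algebraMap k A (a⁻¹ * d) := by
        rw [map_mul]
        have : a • x = algebraMap k A d := by simpa using h
        rw [← this, Algebra.smul_def, ← mul_assoc, ← map_mul, inv_mul_cancel₀ ha, map_one, one_mul]
      exact hx0 (frob_negsq_scalar k ⟨c₁, hc₁, hxx⟩ this)
    · rfl
  · exfalso
    set α : k := b⁻¹ * d with hα
    set β : k := -(b⁻¹ * a) with hβ
    have hyval : y = algebraMap k A α + β • x := by
      have h1 : b • y = algebraMap k A d - a • x := by
        rw [← h]; abel
      have := congrArg (fun z => b⁻¹ • z) h1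
      simp only [smul_smul, inv_mul_cancel₀ hb, one_smul] at this
      rw [this, hα, hβ]
      rw [smul_sub, Algebra.smul_def, Algebra.smul_def, Algebra.smul_def, Algebra.smul_def]
      simp only [map_mul, map_neg, map_inv₀]
      ring_nf
      noncomm_ring
    obtain ⟨c₂, hc₂, hyy⟩ := hy
    have hexp := frob_expand_affine k α β c₁ x hxx
    rw [← hyval, hyy] at hexp
    have hkey : (2*(α*β)) • x = algebraMap k A (c₂ - (α*α + β*β*c₁)) := by
      rw [map_sub, hexp]; abel
    have hβ0 : β ≠ 0 := by
      intro h0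
      rw [h0, zero_smul, add_zero] at hyval
      have : y = 0 := frob_negsq_scalar k ⟨c₂, hc₂, hyy⟩ hyval
      exact hdep 0 (by rw [this, zero_smul])
    have hαβ : 2*(α*β) = 0 := by
      by_contra hne
      have : x = algebraMap k A ((2*(α*β))⁻¹ * (c₂ - (α*α + β*β*c₁))) := by
        rw [map_mul]
        rw [← hkey, Algebra.smul_def, ← mul_assoc, ← map_mul, inv_mul_cancel₀ hne,
          map_one, one_mul]
      exact hx0 (frob_negsq_scalar k ⟨c₁, hc₁, hxx⟩ this)
    have hα0 : α = 0 := by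
      have h2 : (2:k) ≠ 0 := two_ne_zero
      rcases mul_eq_zero.mp hαβ with h | h
      · exact absurd h h2
      · rcases mul_eq_zero.mp h with h' | h'
        · exact h'
        · exact absurd h' hβ0
    rw [hα0, map_zero, zero_add] at hyval
    exact hdep β hyval

variable [FiniteDimensional k A]

lemma frob_cases
    (halg : ∀ x : ℝ, (∃ p : Polynomial k, p ≠ 0 ∧ Polynomial.aeval x p = 0) → x ∈ k)
    (x : A) :
    (∃ r : k, x = algebraMap k A r) ∨
    (∃ b c : k, b^2 < 4*c ∧ x*x + algebraMap k A b * x + algebraMap k A c = 0) := by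
  have hint : IsIntegral k x := IsIntegral.of_finite k x
  have hirr := minpoly.irreducible hint
  have hmon := minpoly.monic hint
  rcases frob_aux_irred_deg k halg hirr hmon with h1 | ⟨h2, hlt⟩
  · left
    have hrepr := hmon.eq_X_add_C h1
    have haev := minpoly.aeval k x
    rw [hrepr] at haev
    simp only [map_add, aeval_X, aeval_C] at haev
    exact ⟨-((minpoly k x).coeff 0), by
      rw [map_neg]
      exact eq_neg_of_add_eq_zero_left haev⟩
  · right
    set p := minpoly k x with hpdef
    obtain ⟨b, hb⟩ : ∃ b, p.coeff 1 = b := ⟨_, rfl⟩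
    obtain ⟨c, hc⟩ : ∃ c, p.coeff 0 = c := ⟨_, rfl⟩
    rw [hb, hc] at hlt
    refine ⟨b, c, hlt, ?_⟩
    have hpne : p ≠ 0 := hmon.ne_zero
    have hdeg : p.degree = 2 := by
      rw [degree_eq_natDegree hpne, h2]; rfl
    have hsub : (p - X^2).natDegree ≤ 1 := by
      by_cases h0 : p - X^2 = 0
      · simp [h0]
      · have hlt2 : (p - X^2).degree < 2 := by
          have h6 : p.degree = (X^2 : (Polynomial k)).degree := by
            rw [hdeg, degree_X_pow]; norm_cast
          have := degree_sub_lt h6 hpne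
            (by rw [hmon.leadingCoeff, (monic_X_pow 2).leadingCoeff])
          rwa [hdeg] at this
        have h5 : (p - X^2).natDegree < 2 := by
          rw [natDegree_lt_iff_degree_lt h0]
          exact_mod_cast hlt2
        omega
    have hrepr := eq_X_add_C_of_natDegree_le_one hsub
    have hc1 : (p - X^2).coeff 1 = b := by
      rw [← hb]; simp [coeff_sub, coeff_X_pow]
    have hc0 : (p - X^2).coeff 0 = c := by
      rw [← hc]; simp [coeff_sub, coeff_X_pow]
    rw [hc1, hc0] at hrepr
    have hps : p = X^2 + C b * X + C c := by
      linear_combination hrepr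
    have haev := minpoly.aeval k x
    rw [← hpdef, hps] at haev
    simp only [map_add, map_mul, aeval_X_pow, aeval_X, aeval_C] at haev
    rw [← haev, pow_two]

lemma frob_quad'
    (halg : ∀ x : ℝ, (∃ p : Polynomial k, p ≠ 0 ∧ Polynomial.aeval x p = 0) → x ∈ k)
    (x : A) : ∃ b c : k, x*x = algebraMap k A b * x + algebraMap k A c := by
  rcases frob_cases k halg x with ⟨r, rfl⟩ | ⟨b, c, _, h⟩
  · exact ⟨r, 0, by rw [← map_mul, map_zero, add_zero, map_mul]⟩
  · exact ⟨-b, -c, by rw [map_neg, map_neg]; linear_combination (norm := noncomm_ring) h⟩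

lemma frob_decomp
    (halg : ∀ x : ℝ, (∃ p : Polynomial k, p ≠ 0 ∧ Polynomial.aeval x p = 0) → x ∈ k)
    (x : A) : ∃ (r : k) (v : A), FrobNegSq k v ∧ x = algebraMap k A r + v := by
  rcases frob_cases k halg x with ⟨r, rfl⟩ | ⟨b, c, hlt, h⟩
  · exact ⟨r, 0, ⟨0, le_refl _, by simp⟩, by simp⟩
  · refine ⟨-(b/2), x + algebraMap k A (b/2), ⟨b/2*(b/2) - c, by nlinarith, ?_⟩,
      by rw [map_neg]; abel⟩
    rw [frob_expand_add_sq, show (2*(b/2) : k) = b by ring, map_sub]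
    linear_combination (norm := noncomm_ring) h

lemma frob_negsq_add
    (halg : ∀ x : ℝ, (∃ p : Polynomial k, p ≠ 0 ∧ Polynomial.aeval x p = 0) → x ∈ k)
    {x y : A} (hx : FrobNegSq k x) (hy : FrobNegSq k y) : FrobNegSq k (x + y) := by
  by_cases hx0 : x = 0
  · simpa [hx0] using hy
  by_cases hdep : ∃ t : k, y = t • x
  · obtain ⟨t, rfl⟩ := hdep
    have h1 : x + t • x = (1 + t) • x := by rw [add_smul, one_smul]
    rw [h1]
    exact frob_negsq_smul k hx _
  push_neg at hdep
  have hind := frob_negsq_indep k hx hy hx0 hdep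
  obtain ⟨c₁, hc₁, hxx⟩ := hx
  obtain ⟨c₂, hc₂, hyy⟩ := hy
  obtain ⟨p, q, hpq⟩ := frob_quad' k halg (x + y)
  obtain ⟨p', q', hpq'⟩ := frob_quad' k halg (x - y)
  have hsum : (x+y)*(x+y) + (x-y)*(x-y) = algebraMap k A (2*c₁+2*c₂) := by
    have e : (x+y)*(x+y) + (x-y)*(x-y) = x*x + x*x + (y*y + y*y) := by noncomm_ring
    rw [e, hxx, hyy,
      show (2*c₁+2*c₂ : k) = c₁ + c₁ + (c₂ + c₂) by ring]
    simp only [map_add]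
  have e2 : algebraMap k A p * (x+y) + algebraMap k A q
      + (algebraMap k A p' * (x-y) + algebraMap k A q') = algebraMap k A (2*c₁+2*c₂) := by
    rw [← hpq, ← hpq']; exact hsum
  have e3 : (p+p') • x + (p-p') • y
      = algebraMap k A p * (x+y) + algebraMap k A p' * (x-y) := by
    simp only [Algebra.smul_def, map_add, map_sub]
    noncomm_ring
  have hkey : (p+p') • x + (p-p') • y = algebraMap k A (2*c₁+2*c₂ - q - q') := by
    rw [e3, map_sub, map_sub]
    linear_combination (norm := noncomm_ring) e2
  obtain ⟨hp1, hp2⟩ := hind _ _ _ hkey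
  have hp0 : p = 0 := by
    have h1 : p + p' = 0 := hp1
    have h2 : p - p' = 0 := hp2
    linarith
  rw [hp0, map_zero, zero_mul, zero_add] at hpq
  by_cases hq : q ≤ 0
  · exact ⟨q, hq, hpq⟩
  · exfalso
    push_neg at hq
    obtain ⟨s, hs0, hss⟩ := frob_aux_sqrt k halg q (le_of_lt hq)
    have hfac : (x + y - algebraMap k A s) * (x + y + algebraMap k A s) = 0 := by
      have hcomm : algebraMap k A s * (x+y) = (x+y) * algebraMap k A s :=
        Algebra.commutes s (x+y)
      have e4 : (x + y - algebraMap k A s) * (x + y + algebraMap k A s)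
          = (x+y)*(x+y) + (x+y)*algebraMap k A s - algebraMap k A s*(x+y)
            - algebraMap k A s*algebraMap k A s := by noncomm_ring
      rw [e4, ← hcomm, ← map_mul, hss, hpq]
      noncomm_ring
    rcases mul_eq_zero.mp hfac with h | h
    · have h5 : x + y = algebraMap k A s := by rwa [sub_eq_zero] at h
      have := hind 1 1 s (by rw [one_smul, one_smul]; exact h5)
      exact one_ne_zero this.1
    · have h5 : x + y = algebraMap k A (-s) := by
        rw [map_neg]
        exact eq_neg_of_add_eq_zero_left h
      have := hind 1 1 (-s) (by rw [one_smul, one_smul]; exact h5)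
      exact one_ne_zero this.1

lemma frob_pair
    (halg : ∀ x : ℝ, (∃ p : Polynomial k, p ≠ 0 ∧ Polynomial.aeval x p = 0) → x ∈ k)
    {x y : A} (hx : FrobNegSq k x) (hy : FrobNegSq k y) :
    ∃ t : k, x*y + y*x = algebraMap k A t := by
  obtain ⟨c₃, _, h3⟩ := frob_negsq_add k halg hx hy
  obtain ⟨c₁, _, hxx⟩ := hx
  obtain ⟨c₂, _, hyy⟩ := hy
  refine ⟨c₃ - c₁ - c₂, ?_⟩
  have e : (x+y)*(x+y) = x*x + (x*y + y*x) + y*y := by noncomm_ring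
  rw [e, hxx, hyy] at h3
  rw [map_sub, map_sub]
  linear_combination (norm := noncomm_ring) h3

lemma frob_normalize
    (halg : ∀ x : ℝ, (∃ p : Polynomial k, p ≠ 0 ∧ Polynomial.aeval x p = 0) → x ∈ k)
    {v : A} (hv : FrobNegSq k v) (h0 : v ≠ 0) :
    ∃ (i : A) (s : k), 0 < s ∧ v = s • i ∧ i * i = algebraMap k A (-1) := by
  obtain ⟨c, hc, hvv⟩ := hv
  have hc0 : c ≠ 0 := by
    rintro rfl
    rw [map_zero] at hvv
    exact h0 (mul_self_eq_zero.mp hvv)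
  obtain ⟨s, hs0, hss⟩ := frob_aux_sqrt k halg (-c) (by
    have := lt_of_le_of_ne hc hc0
    linarith)
  have hsne : s ≠ 0 := by
    intro h
    rw [h, mul_zero] at hss
    exact hc0 (by linarith)
  have hspos : 0 < s := lt_of_le_of_ne hs0 (Ne.symm hsne)
  refine ⟨s⁻¹ • v, s, hspos, ?_, ?_⟩
  · rw [smul_smul, mul_inv_cancel₀ hsne, one_smul]
  · rw [smul_mul_smul_comm, hvv, Algebra.smul_def, ← map_mul]
    congr 1
    have hcs : c = -(s*s) := by linarith
    rw [hcs]
    field_simp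

lemma frob_case_base
    (halg : ∀ x : ℝ, (∃ p : Polynomial k, p ≠ 0 ∧ Polynomial.aeval x p = 0) → x ∈ k)
    (hV : ∀ v : A, FrobNegSq k v → v = 0) :
    Nonempty (A ≃ₐ[k] k) := by
  have hsurj : Function.Surjective (algebraMap k A) := by
    intro x
    obtain ⟨r, v, hv, hx⟩ := frob_decomp k halg x
    rw [hV v hv, add_zero] at hx
    exact ⟨r, hx.symm⟩
  have hbij : Function.Bijective (Algebra.ofId k A) := by
    have : ⇑(Algebra.ofId k A) = ⇑(algebraMap k A) := rfl
    rw [this]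
    exact ⟨(algebraMap k A).injective, hsurj⟩
  exact ⟨(AlgEquiv.ofBijective (Algebra.ofId k A) hbij).symm⟩

lemma frob_X_sq_one_irred : Irreducible ((X:Polynomial k)^2 + 1) := by
  have hnd : ((X:Polynomial k)^2 + 1).natDegree = 2 := by compute_degree!
  rw [irreducible_iff_roots_eq_zero_of_degree_le_three (by omega) (by omega)]
  rw [Multiset.eq_zero_iff_forall_notMem]
  intro r hr
  have hne : ((X:Polynomial k)^2 + 1) ≠ 0 := by
    intro h
    rw [h] at hnd
    simp at hnd
  rw [mem_roots hne] at hr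
  have : r^2 + 1 = 0 := by simpa [IsRoot] using hr
  have hrR : (r:ℝ)^2 + 1 = 0 := by exact_mod_cast congrArg (Subtype.val) this
  nlinarith [sq_nonneg (r:ℝ)]

lemma frob_case_complex
    (halg : ∀ x : ℝ, (∃ p : Polynomial k, p ≠ 0 ∧ Polynomial.aeval x p = 0) → x ∈ k)
    (i : A) (hii : i * i = algebraMap k A (-1))
    (hspan : ∀ v : A, FrobNegSq k v → ∃ t : k, v = t • i) :
    Nonempty (A ≃ₐ[k] (Polynomial k ⧸ Ideal.span {(X : Polynomial k) ^ 2 + 1})) := by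
  have hirr := frob_X_sq_one_irred k
  haveI hmax : (Ideal.span {(X : Polynomial k)^2 + 1}).IsMaximal :=
    PrincipalIdealRing.isMaximal_of_irreducible hirr
  have h0 : ∀ p ∈ Ideal.span {(X : Polynomial k)^2 + 1}, aeval i p = 0 := by
    intro p hp
    rw [Ideal.mem_span_singleton] at hp
    obtain ⟨q, rfl⟩ := hp
    rw [map_mul]
    have : aeval i ((X:Polynomial k)^2 + 1) = 0 := by
      simp only [map_add, aeval_X_pow, map_one]
      rw [pow_two, hii, map_neg, map_one, neg_add_cancel]
    rw [this, zero_mul]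
  set φ : (Polynomial k ⧸ Ideal.span {(X : Polynomial k)^2 + 1}) →ₐ[k] A :=
    Ideal.Quotient.liftₐ _ (aeval i) h0 with hφ
  letI : Field (Polynomial k ⧸ Ideal.span {(X : Polynomial k)^2 + 1}) :=
    Ideal.Quotient.field _
  have hinj : Function.Injective φ := by
    exact RingHom.injective (φ.toRingHom :
      (Polynomial k ⧸ Ideal.span {(X : Polynomial k)^2 + 1}) →+* A)
  have hsurj : Function.Surjective φ := by
    intro x
    obtain ⟨r, v, hv, rfl⟩ := frob_decomp k halg x
    obtain ⟨t, rfl⟩ := hspan v hv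
    refine ⟨Ideal.Quotient.mk _ (C r + C t * X), ?_⟩
    rw [hφ]; show aeval i (C r + C t * X) = _
    simp only [AlgHom.coe_toRingHom, map_add, map_mul, aeval_C, aeval_X]
    rw [Algebra.smul_def]
  exact ⟨(AlgEquiv.ofBijective φ ⟨hinj, hsurj⟩).symm⟩

lemma frob_quat_span
    (halg : ∀ x : ℝ, (∃ p : Polynomial k, p ≠ 0 ∧ Polynomial.aeval x p = 0) → x ∈ k)
    (i j : A) (hii : i * i = algebraMap k A (-1)) (hjj : j * j = algebraMap k A (-1))
    (hanti : i*j + j*i = 0) {v : A} (hv : FrobNegSq k v) :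
    ∃ a b c : k, v = a•i + b•j + c•(i*j) := by
  have hii' : i * i = -1 := by rw [hii, map_neg, map_one]
  have hjj' : j * j = -1 := by rw [hjj, map_neg, map_one]
  have hji : j * i = -(i*j) := eq_neg_of_add_eq_zero_right hanti
  have hik : i*(i*j) = -j := by rw [← mul_assoc, hii', neg_one_mul]
  have hki : (i*j)*i = j := by rw [mul_assoc, hji, mul_neg, hik, neg_neg]
  have hkj : (i*j)*j = -i := by rw [mul_assoc, hjj', mul_neg_one]
  have hjk : j*(i*j) = i := by rw [← mul_assoc, hji, neg_mul, hkj, neg_neg]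
  have hkk : (i*j)*(i*j) = -1 := by rw [mul_assoc, hjk, hii']
  have hi : FrobNegSq k i := ⟨-1, by norm_num, hii⟩
  have hj : FrobNegSq k j := ⟨-1, by norm_num, hjj⟩
  have hk : FrobNegSq k (i*j) := ⟨-1, by norm_num, by rw [hkk, map_neg, map_one]⟩
  obtain ⟨ta, hta⟩ := frob_pair k halg hv hi
  obtain ⟨tb, htb⟩ := frob_pair k halg hv hj
  obtain ⟨tc, htc⟩ := frob_pair k halg hv hk
  set a : k := -(ta/2) with hadef
  set b : k := -(tb/2) with hbdef
  set c : k := -(tc/2) with hcdef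
  have hva : v*i = algebraMap k A (-(2*a)) - i*v := by
    rw [show -(2*a) = ta by rw [hadef]; ring]
    exact eq_sub_of_add_eq hta
  have hvb : v*j = algebraMap k A (-(2*b)) - j*v := by
    rw [show -(2*b) = tb by rw [hbdef]; ring]
    exact eq_sub_of_add_eq htb
  have hvc : v*(i*j) = algebraMap k A (-(2*c)) - (i*j)*v := by
    rw [show -(2*c) = tc by rw [hcdef]; ring]
    exact eq_sub_of_add_eq htc
  set v' : A := v - a•i - b•j - c•(i*j) with hv'def
  have G1 : v'*i + i*v' = 0 := by
    rw [hv'def]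
    simp only [sub_mul, mul_sub, smul_mul_assoc, mul_smul_comm, hii', hji, hki, hik, hva,
      Algebra.algebraMap_eq_smul_one]
    module
  have G2 : v'*j + j*v' = 0 := by
    rw [hv'def]
    simp only [sub_mul, mul_sub, smul_mul_assoc, mul_smul_comm, hjj', hji, hkj, hjk, hvb,
      Algebra.algebraMap_eq_smul_one]
    module
  have G3 : v'*(i*j) + (i*j)*v' = 0 := by
    rw [hv'def]
    simp only [sub_mul, mul_sub, smul_mul_assoc, mul_smul_comm, hkk, hik, hki, hjk, hkj, hvc,
      Algebra.algebraMap_eq_smul_one]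
    module
  have G1' : v'*i = -(i*v') := eq_neg_of_add_eq_zero_left G1
  have G2' : v'*j = -(j*v') := eq_neg_of_add_eq_zero_left G2
  have hcomm : v'*(i*j) = (i*j)*v' := by
    calc v'*(i*j) = (v'*i)*j := (mul_assoc _ _ _).symm
    _ = -(i*v')*j := by rw [G1']
    _ = -(i*(v'*j)) := by rw [neg_mul, mul_assoc]
    _ = -(i*(-(j*v'))) := by rw [G2']
    _ = i*(j*v') := by rw [mul_neg, neg_neg]
    _ = (i*j)*v' := (mul_assoc _ _ _).symm
  rw [hcomm] at G3
  have hv'0 : v' = 0 := by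
    have h2 : (2:A) * ((i*j)*v') = 0 := by rw [two_mul]; exact G3
    have h2ne : (2:A) ≠ 0 := by
      have he : (2:A) = algebraMap k A 2 := by rw [map_ofNat]
      rw [he, ne_eq, map_eq_zero_iff _ (algebraMap k A).injective]
      norm_num
    have hk0 : (i*j) ≠ 0 := by
      intro h
      rw [h, zero_mul] at hkk
      have h1 : (1:A) = 0 := neg_eq_zero.mp hkk.symm
      exact one_ne_zero h1
    rcases mul_eq_zero.mp h2 with h | h
    · exact absurd h h2ne
    rcases mul_eq_zero.mp h with h | h
    · exact absurd h hk0
    · exact h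
  refine ⟨a, b, c, ?_⟩
  rw [hv'def, sub_sub, sub_sub, sub_eq_zero] at hv'0
  exact hv'0.trans (add_assoc _ _ _).symm

lemma frob_case_quat
    (halg : ∀ x : ℝ, (∃ p : Polynomial k, p ≠ 0 ∧ Polynomial.aeval x p = 0) → x ∈ k)
    (i j : A) (hii : i * i = algebraMap k A (-1)) (hjj : j * j = algebraMap k A (-1))
    (hanti : i*j + j*i = 0) :
    Nonempty (A ≃ₐ[k] QuaternionAlgebra k (-1) 0 (-1)) := by
  have hji : j * i = -(i*j) := eq_neg_of_add_eq_zero_right hanti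
  let qb : QuaternionAlgebra.Basis A (-1:k) (0:k) (-1:k) :=
    { i := i, j := j, k := i*j,
      i_mul_i := by rw [hii, Algebra.algebraMap_eq_smul_one, zero_smul, add_zero],
      j_mul_j := by rw [hjj, Algebra.algebraMap_eq_smul_one],
      i_mul_j := rfl,
      j_mul_i := by rw [hji, zero_smul, zero_sub] }
  let φ := qb.liftHom
  have hinj : Function.Injective φ := by
    have h : Function.Injective (show Quaternion k →+* A from φ.toRingHom) :=
      RingHom.injective _
    exact h
  have hsurj : Function.Surjective φ := by
    intro x
    obtain ⟨r, v, hv, rfl⟩ := frob_decomp k halg x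
    obtain ⟨a, b, c, hvrepr⟩ := frob_quat_span k halg i j hii hjj hanti hv
    refine ⟨⟨r, a, b, c⟩, ?_⟩
    show qb.liftHom ⟨r, a, b, c⟩ = _
    simp only [QuaternionAlgebra.Basis.liftHom_apply, QuaternionAlgebra.Basis.lift]
    rw [hvrepr]
    abel
  exact ⟨(AlgEquiv.ofBijective φ ⟨hinj, hsurj⟩).symm⟩

end domain

end FrobAlg

/-- Let `k` be a subfield of `ℝ` that is algebraically closed in `ℝ`, and let `A` be a
nontrivial finite-dimensional `k`-algebra. Then either `A` has a zero-divisor, or `A`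
is isomorphic as a `k`-algebra to `k`, to `k[X]/(X² + 1)`, or to the quaternion algebra
over `k`. -/
theorem frobenius_like_theorem_over_real_closed_subfield
    (k : Subfield ℝ)
    (halg : ∀ x : ℝ, (∃ p : Polynomial k, p ≠ 0 ∧ Polynomial.aeval x p = 0) → x ∈ k)
    {A : Type} [Ring A] [Algebra k A] [FiniteDimensional k A] [Nontrivial A] :
    (∃ x y : A, x ≠ 0 ∧ y ≠ 0 ∧ x * y = 0) ∨
    Nonempty (A ≃ₐ[k] k) ∨
    Nonempty (A ≃ₐ[k] (Polynomial k ⧸ Ideal.span {(X : Polynomial k) ^ 2 + 1})) ∨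
    Nonempty (A ≃ₐ[k] QuaternionAlgebra k (-1) 0 (-1)) := by
  by_cases hzd : ∃ x y : A, x ≠ 0 ∧ y ≠ 0 ∧ x * y = 0
  · exact Or.inl hzd
  right
  haveI : NoZeroDivisors A := ⟨by
    intro a b hab
    by_contra hc
    push_neg at hc
    exact hzd ⟨a, b, hc.1, hc.2, hab⟩⟩
  haveI : IsDomain A := NoZeroDivisors.to_isDomain A
  by_cases hV : ∀ v : A, FrobNegSq k v → v = 0
  · exact Or.inl (frob_case_base k halg hV)
  · push_neg at hV
    obtain ⟨v₀, hv₀, hv₀ne⟩ := hV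
    obtain ⟨i, s, hs, hv₀i, hii⟩ := frob_normalize k halg hv₀ hv₀ne
    by_cases hspan : ∀ v : A, FrobNegSq k v → ∃ t : k, v = t • i
    · exact Or.inr (Or.inl (frob_case_complex k halg i hii hspan))
    · push_neg at hspan
      obtain ⟨y, hy, hyind⟩ := hspan
      have hi : FrobNegSq k i := ⟨-1, by norm_num, hii⟩
      obtain ⟨t₀, ht₀⟩ := frob_pair k halg hy hi
      have hii' : i * i = -1 := by rw [hii, map_neg, map_one]
      set y' : A := y + (t₀/2) • i with hy'def
      have hy' : FrobNegSq k y' := frob_negsq_add k halg hy (frob_negsq_smul k hi _)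
      have hy'0 : y' ≠ 0 := by
        intro h
        apply hyind (-(t₀/2))
        have : y = -((t₀/2) • i) := eq_neg_of_add_eq_zero_left (hy'def ▸ h)
        rw [this, neg_smul]
      have hanti' : y'*i + i*y' = 0 := by
        rw [hy'def]
        have hyi : y*i = algebraMap k A t₀ - i*y := eq_sub_of_add_eq ht₀
        simp only [add_mul, mul_add, smul_mul_assoc, mul_smul_comm, hii', hyi,
          Algebra.algebraMap_eq_smul_one]
        module
      obtain ⟨j, s', hs', hy'j, hjj⟩ := frob_normalize k halg hy' hy'0
      have hanti : i*j + j*i = 0 := by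
        have h1 : s' • (j*i + i*j) = 0 := by
          rw [← hanti', hy'j]
          simp only [smul_mul_assoc, mul_smul_comm, smul_add]
        rcases smul_eq_zero.mp h1 with h | h
        · exact absurd h (ne_of_gt hs')
        · rw [← h]; abel
      exact Or.inr (Or.inr (frob_case_quat k halg i j hii hjj hanti))
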